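/- Let H_n be the monic Hermite polynomials and a ≠ 0. The matrix polynomials Q_n(x) = [[-(2/a)H_n(x), n H_{n-1}(x)],[n H_{n-1}(x), -(2/a)H_n(x) - a n x H_{n-1}(x)]] have leading coefficient diag(-2/a, -2/a - an) (which is nonsingular) and satisfy ∫_ℝ Q_n(x) W(x) Q_m(x)* dx = 0 for n ≠ m, where W(x) = e^{-x²}[[1+a²x², ax],[ax,1]]. -/

import Mathlib

open Matrix Polynomial MeasureTheory Real Filter

noncomputable def Kint (p : Polynomial ℝ) : ℝ := ∫ x : ℝ, p.eval x * Real.exp (-x ^ 2)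

lemma integrable_pow_gauss (n : ℕ) :
    Integrable fun x : ℝ => x ^ n * Real.exp (-x ^ 2) := by
  have h := integrable_rpow_mul_exp_neg_mul_sq (b := 1) one_pos
      (s := (n : ℝ)) (neg_one_lt_zero.trans_le (Nat.cast_nonneg n))
  simpa [Real.rpow_natCast, neg_mul, one_mul] using h

lemma integrable_poly_gauss (p : Polynomial ℝ) :
    Integrable fun x : ℝ => p.eval x * Real.exp (-x ^ 2) := by
  have : (fun x : ℝ => p.eval x * Real.exp (-x ^ 2)) =
      fun x : ℝ => ∑ i ∈ Finset.range (p.natDegree + 1),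
        p.coeff i * (x ^ i * Real.exp (-x ^ 2)) := by
    funext x
    rw [eval_eq_sum_range, Finset.sum_mul]
    simp [mul_assoc]
  rw [this]
  exact integrable_finset_sum _ fun i _ => (integrable_pow_gauss i).const_mul _

lemma tendsto_poly_gauss_atTop (p : Polynomial ℝ) :
    Tendsto (fun x : ℝ => p.eval x * Real.exp (-x ^ 2)) atTop (nhds 0) := by
  have : (fun x : ℝ => p.eval x * Real.exp (-x ^ 2)) =
      fun x : ℝ => ∑ i ∈ Finset.range (p.natDegree + 1),
        p.coeff i * (x ^ i * Real.exp (-x ^ 2)) := by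
    funext x
    rw [eval_eq_sum_range, Finset.sum_mul]
    simp [mul_assoc]
  rw [this]
  have h0 : (0 : ℝ) = ∑ i ∈ Finset.range (p.natDegree + 1), p.coeff i * 0 := by simp
  rw [h0]
  refine tendsto_finset_sum _ fun i _ => Tendsto.const_mul _ ?_
  have hlo := rpow_mul_exp_neg_mul_sq_isLittleO_exp_neg (b := 1) one_pos (i : ℝ)
  have hlim : Tendsto (fun x : ℝ => Real.exp (-(1/2) * x)) atTop (nhds 0) := by
    have h2 : Tendsto (fun x : ℝ => (1/2 : ℝ) * x) atTop atTop :=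
      tendsto_id.const_mul_atTop (by norm_num)
    have h3 : Tendsto (fun x : ℝ => Real.exp (-((1/2:ℝ) * x))) atTop (nhds 0) :=
      Real.tendsto_exp_neg_atTop_nhds_zero.comp h2
    simpa [neg_mul] using h3
  have := hlo.tendsto_zero_of_tendsto hlim
  simpa [Real.rpow_natCast, neg_mul, one_mul] using this
lemma tendsto_poly_gauss_atBot (p : Polynomial ℝ) :
    Tendsto (fun x : ℝ => p.eval x * Real.exp (-x ^ 2)) atBot (nhds 0) := by
  have h := (tendsto_poly_gauss_atTop (p.comp (-X))).comp tendsto_neg_atBot_atTop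
  have he : (fun x : ℝ => (p.comp (-X)).eval x * Real.exp (-x ^ 2)) ∘ (fun x : ℝ => -x)
      = fun x : ℝ => p.eval x * Real.exp (-x ^ 2) := by
    funext x
    simp [Function.comp, eval_comp, neg_sq]
  rwa [he] at h

lemma Kint_add (p q : Polynomial ℝ) : Kint (p + q) = Kint p + Kint q := by
  unfold Kint
  rw [← integral_add (integrable_poly_gauss p) (integrable_poly_gauss q)]
  simp [add_mul]

lemma Kint_C_mul (c : ℝ) (p : Polynomial ℝ) : Kint (C c * p) = c * Kint p := by
  unfold Kint
  rw [← integral_const_mul]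
  simp [mul_assoc]

lemma Kint_zero : Kint 0 = 0 := by simp [Kint]

lemma Kint_sub (p q : Polynomial ℝ) : Kint (p - q) = Kint p - Kint q := by
  have h := Kint_add (p - q) q
  simp only [sub_add_cancel] at h
  linarith

lemma Kint_parts (p : Polynomial ℝ) :
    Kint (derivative p) = 2 * Kint (X * p) := by
  have key : Kint (derivative p - C 2 * X * p) = 0 := by
    unfold Kint
    set f : ℝ → ℝ := fun x => p.eval x * Real.exp (-x ^ 2) with hf
    set g : ℝ → ℝ := fun x =>
      (derivative p - C 2 * X * p).eval x * Real.exp (-x ^ 2) with hg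
    have hderiv : ∀ x : ℝ, HasDerivAt f (g x) x := by
      intro x
      have h1 : HasDerivAt (fun x : ℝ => -x ^ 2) (-(2 * x)) x := by
        simpa using (show HasDerivAt (fun y : ℝ => -y ^ 2) _ x from (hasDerivAt_pow 2 x).neg)
      have h2 := h1.exp
      have h3 : HasDerivAt (fun x : ℝ => p.eval x * Real.exp (-x ^ 2)) _ x := (p.hasDerivAt x).mul h2
      convert h3 using 1
      simp [hg]
      ring
    have hint : Integrable g := integrable_poly_gauss _
    have hIoi : ∫ x in Set.Ioi (0:ℝ), g x = 0 - f 0 :=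
      integral_Ioi_of_hasDerivAt_of_tendsto' (fun x _ => hderiv x)
        hint.integrableOn (tendsto_poly_gauss_atTop p)
    have hIic : ∫ x in Set.Iic (0:ℝ), g x = f 0 - 0 :=
      integral_Iic_of_hasDerivAt_of_tendsto' (fun x _ => hderiv x)
        hint.integrableOn (tendsto_poly_gauss_atBot p)
    have := intervalIntegral.integral_Iic_add_Ioi (μ := volume) (b := (0:ℝ))
      hint.integrableOn hint.integrableOn
    rw [hIoi, hIic] at this
    rw [← this]
    ring
  have h2 : Kint (C 2 * X * p) = 2 * Kint (X * p) := by
    rw [mul_assoc, Kint_C_mul]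
  rw [Kint_sub, h2] at key
  linarith
section Herm

variable {H : ℕ → Polynomial ℝ}

def HM (H : ℕ → Polynomial ℝ) : Prop := ∀ n, (H n).Monic ∧ (H n).natDegree = n
def HO (H : ℕ → Polynomial ℝ) : Prop := ∀ n m, n ≠ m → Kint (H n * H m) = 0

lemma H_zero (hM : HM H) : H 0 = 1 :=
  (hM 0).1.natDegree_eq_zero.mp (hM 0).2

lemma H_coeff_self (hM : HM H) (n : ℕ) : (H n).coeff n = 1 := by
  have := (hM n).1.coeff_natDegree
  rwa [(hM n).2] at this

lemma pair_lt (hM : HM H) (hO : HO H) :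
    ∀ d (q : Polynomial ℝ), q.natDegree ≤ d → ∀ n, d < n → Kint (H n * q) = 0 := by
  intro d
  induction d with
  | zero =>
    intro q hq n hn
    rw [Polynomial.eq_C_of_natDegree_le_zero hq]
    have : H n * C (q.coeff 0) = C (q.coeff 0) * (H n * H 0) := by
      rw [H_zero hM]; ring
    rw [this, Kint_C_mul, hO n 0 (by omega : n ≠ 0), mul_zero]
  | succ d ih =>
    intro q hq n hn
    set r := q - C (q.coeff (d + 1)) * H (d + 1) with hr
    have hrdeg : r.natDegree ≤ d := by
      rw [Polynomial.natDegree_le_iff_coeff_eq_zero]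
      intro N hN
      rcases eq_or_lt_of_le (Nat.succ_le_of_lt hN) with h | h
      · simp [hr, ← h, Polynomial.coeff_C_mul, H_coeff_self hM (d+1)]
      · have h1 : q.coeff N = 0 := Polynomial.coeff_eq_zero_of_natDegree_lt (lt_of_le_of_lt hq h)
        have h2 : (H (d+1)).coeff N = 0 :=
          Polynomial.coeff_eq_zero_of_natDegree_lt (by rw [(hM (d+1)).2]; exact h)
        simp [hr, Polynomial.coeff_C_mul, h1, h2]
    have hsplit : H n * q = H n * r + C (q.coeff (d+1)) * (H n * H (d+1)) := by
      rw [hr]; ring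
    rw [hsplit, Kint_add, Kint_C_mul, ih r hrdeg n (Nat.lt_of_succ_lt hn),
      hO n (d+1) (by omega), mul_zero, add_zero]

lemma pair_coeff (hM : HM H) (hO : HO H) (n : ℕ) (q : Polynomial ℝ)
    (hq : q.natDegree ≤ n) :
    Kint (H n * q) = q.coeff n * Kint (H n * H n) := by
  set r := q - C (q.coeff n) * H n with hr
  have hsplit : H n * q = H n * r + C (q.coeff n) * (H n * H n) := by
    rw [hr]; ring
  have hrc : ∀ N, n ≤ N → r.coeff N = 0 := by
    intro N hN
    rcases eq_or_lt_of_le hN with h | h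
    · simp [hr, ← h, Polynomial.coeff_C_mul, H_coeff_self hM n]
    · have h1 : q.coeff N = 0 := Polynomial.coeff_eq_zero_of_natDegree_lt (lt_of_le_of_lt hq h)
      have h2 : (H n).coeff N = 0 :=
        Polynomial.coeff_eq_zero_of_natDegree_lt (by rw [(hM n).2]; exact h)
      simp [hr, Polynomial.coeff_C_mul, h1, h2]
  have hKr : Kint (H n * r) = 0 := by
    cases n with
    | zero =>
      have : r = 0 := by
        rw [Polynomial.eq_C_of_natDegree_le_zero (le_trans (Polynomial.natDegree_le_iff_coeff_eq_zero.mpr (fun N hN => hrc N (Nat.zero_le N))) (le_refl 0)), hrc 0 (le_refl 0), map_zero]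
      rw [this, mul_zero, Kint_zero]
    | succ d =>
      refine pair_lt hM hO d r ?_ (d+1) (Nat.lt_succ_self d)
      rw [Polynomial.natDegree_le_iff_coeff_eq_zero]
      intro N hN
      exact hrc N (by omega)
  rw [hsplit, Kint_add, hKr, Kint_C_mul, zero_add]

lemma H_ne_zero (hM : HM H) (n : ℕ) : H n ≠ 0 := (hM n).1.ne_zero

lemma Kint_congr {p q : Polynomial ℝ} (h : p = q) : Kint p = Kint q := by rw [h]

lemma Nrec (hM : HM H) (hO : HO H) (n : ℕ) :
    Kint (H (n+1) * H (n+1)) = ((n : ℝ) + 1) / 2 * Kint (H n * H n) := by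
  have hdeg : (X * H n).natDegree ≤ n + 1 := by
    rw [Polynomial.natDegree_mul Polynomial.X_ne_zero (H_ne_zero hM n),
      Polynomial.natDegree_X, (hM n).2]
    omega
  have hcoeff : (X * H n).coeff (n+1) = 1 := by
    rw [Polynomial.coeff_X_mul, H_coeff_self hM n]
  have step1 : Kint (H (n+1) * (X * H n)) = Kint (H (n+1) * H (n+1)) := by
    rw [pair_coeff hM hO (n+1) (X * H n) hdeg, hcoeff, one_mul]
  have step2 : Kint (H (n+1) * (X * H n)) = 1/2 * Kint (derivative (H n * H (n+1))) := by
    have h1 : H (n+1) * (X * H n) = X * (H n * H (n+1)) := by ring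
    rw [h1]
    have := Kint_parts (H n * H (n+1))
    linarith
  have hd1 : Kint (derivative (H n) * H (n+1)) = 0 := by
    have h1 : derivative (H n) * H (n+1) = H (n+1) * derivative (H n) := by ring
    rw [h1, pair_coeff hM hO (n+1) (derivative (H n))
      (le_trans (Polynomial.natDegree_derivative_le _) (by rw [(hM n).2]; omega))]
    rw [Polynomial.coeff_derivative,
      Polynomial.coeff_eq_zero_of_natDegree_lt (by rw [(hM n).2]; omega), zero_mul, zero_mul]
  have hd2 : Kint (H n * derivative (H (n+1))) = ((n : ℝ) + 1) * Kint (H n * H n) := by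
    rw [pair_coeff hM hO n (derivative (H (n+1)))
      (le_trans (Polynomial.natDegree_derivative_le _) (by rw [(hM (n+1)).2]; omega))]
    rw [Polynomial.coeff_derivative, H_coeff_self hM (n+1)]
    ring
  rw [Polynomial.derivative_mul, Kint_add, hd1, hd2, zero_add] at step2
  rw [← step1, step2]
  ring

lemma N_zero (hM : HM H) : Kint (H 0 * H 0) = Real.sqrt Real.pi := by
  rw [H_zero hM, mul_one]
  have := integral_gaussian 1
  simp only [neg_mul, one_mul, div_one] at this
  simpa [Kint] using this

lemma N_pos (hM : HM H) (hO : HO H) : ∀ n, 0 < Kint (H n * H n) := by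
  intro n
  induction n with
  | zero => rw [N_zero hM]; exact Real.sqrt_pos.mpr Real.pi_pos
  | succ d ih =>
    rw [Nrec hM hO d]
    positivity

lemma zero_of_orth (hM : HM H) (hO : HO H) :
    ∀ d (q : Polynomial ℝ), q.natDegree ≤ d →
      (∀ j, j ≤ d → Kint (H j * q) = 0) → q = 0 := by
  intro d
  induction d with
  | zero =>
    intro q hq horth
    have h0 : q.coeff 0 = 0 := by
      have := pair_coeff hM hO 0 q hq
      rw [horth 0 le_rfl] at this
      have hN := N_pos hM hO 0
      exact by
        by_contra hc
        exact hc (by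
          field_simp at this
          rcases mul_eq_zero.mp this.symm with h | h
          · exact h
          · exact absurd h hN.ne')
    rw [Polynomial.eq_C_of_natDegree_le_zero hq, h0, map_zero]
  | succ d ih =>
    intro q hq horth
    have hc : q.coeff (d+1) = 0 := by
      have := pair_coeff hM hO (d+1) q hq
      rw [horth (d+1) le_rfl] at this
      have hN := N_pos hM hO (d+1)
      by_contra hcne
      exact hcne (by
        field_simp at this
        rcases mul_eq_zero.mp this.symm with h | h
        · exact h
        · exact absurd h hN.ne')
    refine ih q ?_ (fun j hj => horth j (by omega))
    rw [Polynomial.natDegree_le_iff_coeff_eq_zero]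
    intro N hN
    rcases eq_or_lt_of_le (Nat.succ_le_of_lt hN) with h | h
    · rw [← h]; exact hc
    · exact Polynomial.coeff_eq_zero_of_natDegree_lt (lt_of_le_of_lt hq h)
lemma derivH (hM : HM H) (hO : HO H) (n : ℕ) :
    derivative (H n) = C (n : ℝ) * H (n - 1) := by
  cases n with
  | zero => simp [H_zero hM]
  | succ k =>
    have hdeg : (derivative (H (k+1)) - C ((k+1 : ℕ) : ℝ) * H k).natDegree ≤ k := by
      refine le_trans (Polynomial.natDegree_sub_le _ _) (max_le ?_ ?_)
      · exact le_trans (Polynomial.natDegree_derivative_le _) (by rw [(hM (k+1)).2]; omega)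
      · exact le_trans (Polynomial.natDegree_C_mul_le _ _) (le_of_eq (hM k).2)
    have horth : ∀ j, j ≤ k →
        Kint (H j * (derivative (H (k+1)) - C ((k+1 : ℕ) : ℝ) * H k)) = 0 := by
      intro j hj
      have hsplit : H j * (derivative (H (k+1)) - C ((k+1 : ℕ) : ℝ) * H k)
          = H j * derivative (H (k+1)) - C ((k+1 : ℕ) : ℝ) * (H j * H k) := by ring
      rw [hsplit, Kint_sub, Kint_C_mul]
      -- compute Kint (H j * derivative (H (k+1)))
      have hA : Kint (H j * derivative (H (k+1)))
          = 2 * (X * H j).coeff (k+1) * Kint (H (k+1) * H (k+1)) := by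
        have hparts := Kint_parts (H j * H (k+1))
        rw [Polynomial.derivative_mul, Kint_add] at hparts
        have hz : Kint (derivative (H j) * H (k+1)) = 0 := by
          have h1 : derivative (H j) * H (k+1) = H (k+1) * derivative (H j) := by ring
          rw [h1, pair_coeff hM hO (k+1) (derivative (H j))
            (le_trans (Polynomial.natDegree_derivative_le _) (by rw [(hM j).2]; omega))]
          rw [Polynomial.coeff_derivative,
            Polynomial.coeff_eq_zero_of_natDegree_lt (by rw [(hM j).2]; omega), zero_mul, zero_mul]
        have hX : Kint (X * (H j * H (k+1)))
            = (X * H j).coeff (k+1) * Kint (H (k+1) * H (k+1)) := by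
          have h1 : X * (H j * H (k+1)) = H (k+1) * (X * H j) := by ring
          rw [h1, pair_coeff hM hO (k+1) (X * H j)
            (by rw [Polynomial.natDegree_mul Polynomial.X_ne_zero (H_ne_zero hM j),
                Polynomial.natDegree_X, (hM j).2]; omega)]
        rw [hz, zero_add] at hparts
        rw [hparts, hX]
        ring
      rw [hA]
      rcases eq_or_lt_of_le hj with h | h
      · subst h
        rw [Polynomial.coeff_X_mul, H_coeff_self hM j, Nrec hM hO j]
        push_cast
        ring
      · rw [Polynomial.coeff_X_mul,
          Polynomial.coeff_eq_zero_of_natDegree_lt (by rw [(hM j).2]; omega),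
          hO j k (by omega)]
        ring
    have := zero_of_orth hM hO k _ hdeg horth
    have h2 : derivative (H (k+1)) = C ((k+1 : ℕ) : ℝ) * H k := by
      have := sub_eq_zero.mp this
      exact this
    rw [h2]
    norm_num

lemma threeterm (hM : HM H) (hO : HO H) (n : ℕ) :
    X * H n = H (n+1) + C ((n : ℝ) / 2) * H (n - 1) := by
  set s := X * H n - H (n+1) - C ((n : ℝ) / 2) * H (n - 1) with hs
  have hdeg : s.natDegree ≤ n := by
    rw [Polynomial.natDegree_le_iff_coeff_eq_zero]
    intro N hN
    rw [hs]
    rcases eq_or_lt_of_le (Nat.succ_le_of_lt hN) with h | h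
    · subst h
      simp only [Polynomial.coeff_sub, Polynomial.coeff_X_mul, Polynomial.coeff_C_mul]
      rw [H_coeff_self hM n, H_coeff_self hM (n+1),
        Polynomial.coeff_eq_zero_of_natDegree_lt (by rw [(hM (n-1)).2]; omega)]
      ring
    · obtain ⟨M, rfl⟩ : ∃ M, N = M + 1 := ⟨N - 1, by omega⟩
      simp only [Polynomial.coeff_sub, Polynomial.coeff_X_mul, Polynomial.coeff_C_mul]
      rw [Polynomial.coeff_eq_zero_of_natDegree_lt (by rw [(hM n).2]; omega),
        Polynomial.coeff_eq_zero_of_natDegree_lt (by rw [(hM (n+1)).2]; omega),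
        Polynomial.coeff_eq_zero_of_natDegree_lt (by rw [(hM (n-1)).2]; omega)]
      ring
  have horth : ∀ j, j ≤ n → Kint (H j * s) = 0 := by
    intro j hj
    have hsplit : H j * s = X * (H j * H n) - H j * H (n+1)
        - C ((n : ℝ) / 2) * (H j * H (n-1)) := by rw [hs]; ring
    rw [hsplit, Kint_sub, Kint_sub, Kint_C_mul]
    have hXpart : Kint (X * (H j * H n)) = ((n : ℝ) / 2) * Kint (H j * H (n-1)) := by
      have hparts := Kint_parts (H j * H n)
      rw [Polynomial.derivative_mul, Kint_add, derivH hM hO j, derivH hM hO n] at hparts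
      have hz : Kint (C ((j : ℝ)) * H (j-1) * H n) = 0 := by
        rcases Nat.eq_zero_or_pos j with h | h
        · subst h; simp [Kint_zero]
        · have h1 : C ((j : ℝ)) * H (j-1) * H n = C ((j : ℝ)) * (H (j-1) * H n) := by ring
          rw [h1, Kint_C_mul, hO (j-1) n (by omega), mul_zero]
      have h2 : Kint (H j * (C ((n : ℝ)) * H (n-1)))
          = (n : ℝ) * Kint (H j * H (n-1)) := by
        have h3 : H j * (C ((n : ℝ)) * H (n-1)) = C ((n : ℝ)) * (H j * H (n-1)) := by ring
        rw [h3, Kint_C_mul]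
      rw [hz, zero_add, h2] at hparts
      linarith
    rw [hXpart, hO j (n+1) (by omega)]
    ring
  have hzero := zero_of_orth hM hO n s hdeg horth
  rw [hs] at hzero
  have : X * H n - H (n+1) - C ((n : ℝ) / 2) * H (n - 1) = 0 := hzero
  linear_combination this
noncomputable def Tmat (a : ℝ) : Matrix (Fin 2) (Fin 2) (Polynomial ℝ) :=
  !![1, C a * X; 0, 1]

noncomputable def Qmat (H : ℕ → Polynomial ℝ) (a : ℝ) (n : ℕ) :
    Matrix (Fin 2) (Fin 2) (Polynomial ℝ) :=
  !![C (-(2/a)) * H n, C (n : ℝ) * H (n - 1);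
     C (n : ℝ) * H (n - 1), C (-(2/a)) * H n - C (a * (n : ℝ)) * X * H (n - 1)]

noncomputable def Amat (H : ℕ → Polynomial ℝ) (a : ℝ) (n : ℕ) :
    Matrix (Fin 2) (Fin 2) (Polynomial ℝ) :=
  !![C (-(2/a)) * H n, C (-2 : ℝ) * H (n+1);
     C (n : ℝ) * H (n - 1), C (-(2/a)) * H n]

lemma QT_eq (hM : HM H) (hO : HO H) (a : ℝ) (ha : a ≠ 0) (n : ℕ) :
    Qmat H a n * Tmat a = Amat H a n := by
  have hca2 : (C (2/a) : Polynomial ℝ) * C a = C (2 : ℝ) := by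
    rw [← C_mul]; congr 1; field_simp
  have hc2 : (C ((n:ℝ)/2) : Polynomial ℝ) * C (2:ℝ) = ((n : ℕ) : Polynomial ℝ) := by
    rw [← C_mul, show ((n:ℝ)/2*2) = ((n:ℕ):ℝ) by push_cast; ring, Polynomial.C_eq_natCast]
  have h3 := threeterm hM hO n
  refine Matrix.ext fun i j => ?_
  fin_cases i <;> fin_cases j <;>
    simp [Qmat, Tmat, Amat, Matrix.mul_apply, Fin.sum_univ_two]
  · linear_combination (-(H n * X)) * hca2 - C (2:ℝ) * h3 - H (n-1) * hc2
  · ring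
lemma Kint_neg (p : Polynomial ℝ) : Kint (-p) = -Kint p := by
  have := Kint_sub 0 p
  simpa [Kint_zero] using this

lemma entryK (hM : HM H) (hO : HO H) (a : ℝ) (ha : a ≠ 0) (n m : ℕ) (hnm : n ≠ m)
    (i j : Fin 2) : Kint ((Amat H a n * (Amat H a m)ᵀ) i j) = 0 := by
  fin_cases i <;> fin_cases j <;>
    simp only [Amat, Matrix.mul_apply, Matrix.transpose_apply, Matrix.vecHead, Matrix.vecTail,
      Fin.sum_univ_two, Fin.isValue, Matrix.cons_val', Matrix.cons_val_zero, Matrix.cons_val_one,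
      Matrix.head_cons, Matrix.head_fin_const, Matrix.empty_val', Matrix.cons_val_fin_one,
      Matrix.of_apply, Fin.mk_zero, Fin.mk_one]
  · -- (0,0)
    have e : C (-(2/a)) * H n * (C (-(2/a)) * H m) + C (-2:ℝ) * H (n+1) * (C (-2:ℝ) * H (m+1))
        = C (-(2/a)) * (C (-(2/a)) * (H n * H m))
          + C (-2:ℝ) * (C (-2:ℝ) * (H (n+1) * H (m+1))) := by ring
    rw [e, Kint_add, Kint_C_mul, Kint_C_mul, Kint_C_mul, Kint_C_mul, hO n m hnm,
      hO (n+1) (m+1) (by omega)]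
    ring
  · -- (0,1)
    have e : C (-(2/a)) * H n * (C (m:ℝ) * H (m-1)) + C (-2:ℝ) * H (n+1) * (C (-(2/a)) * H m)
        = C (m:ℝ) * (C (-(2/a)) * (H n * H (m-1)))
          + C (-2:ℝ) * (C (-(2/a)) * (H (n+1) * H m)) := by ring
    rw [e, Kint_add, Kint_C_mul, Kint_C_mul, Kint_C_mul, Kint_C_mul]
    by_cases hm : m = n + 1
    · subst hm
      rw [Nat.add_sub_cancel, Nrec hM hO n]
      push_cast
      ring
    · rw [hO (n+1) m (by omega)]
      rcases m with _ | k
      · simp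
      · rw [Nat.add_sub_cancel, hO n k (by omega)]
        ring
  · -- (1,0)
    have e : C (n:ℝ) * H (n-1) * (C (-(2/a)) * H m) + C (-(2/a)) * H n * (C (-2:ℝ) * H (m+1))
        = C (n:ℝ) * (C (-(2/a)) * (H (n-1) * H m))
          + C (-2:ℝ) * (C (-(2/a)) * (H n * H (m+1))) := by ring
    rw [e, Kint_add, Kint_C_mul, Kint_C_mul, Kint_C_mul, Kint_C_mul]
    by_cases hn : n = m + 1
    · subst hn
      rw [Nat.add_sub_cancel, Nrec hM hO m]
      push_cast
      ring
    · rw [hO n (m+1) (by omega)]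
      rcases n with _ | k
      · simp
      · rw [Nat.add_sub_cancel, hO k m (by omega)]
        ring
  · -- (1,1)
    have e : C (n:ℝ) * H (n-1) * (C (m:ℝ) * H (m-1)) + C (-(2/a)) * H n * (C (-(2/a)) * H m)
        = C (n:ℝ) * (C (m:ℝ) * (H (n-1) * H (m-1)))
          + C (-(2/a)) * (C (-(2/a)) * (H n * H m)) := by ring
    rw [e, Kint_add, Kint_C_mul, Kint_C_mul, Kint_C_mul, Kint_C_mul, hO n m hnm]
    rcases n with _ | k
    · simp
    · rcases m with _ | l
      · simp
      · rw [Nat.add_sub_cancel, Nat.add_sub_cancel, hO k l (by omega)]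
        ring
lemma Qdeg (hM : HM H) (a : ℝ) (n : ℕ) (i j : Fin 2) :
    (Qmat H a n i j).natDegree ≤ n := by
  fin_cases i <;> fin_cases j <;>
    simp only [Qmat, Fin.isValue, Matrix.cons_val', Matrix.cons_val_zero, Matrix.cons_val_one,
      Matrix.head_cons, Matrix.head_fin_const, Matrix.empty_val', Matrix.cons_val_fin_one,
      Matrix.of_apply, Fin.mk_zero, Fin.mk_one]
  · exact le_trans (Polynomial.natDegree_C_mul_le _ _) (le_of_eq (hM n).2)
  · exact le_trans (Polynomial.natDegree_C_mul_le _ _) (by rw [(hM (n-1)).2]; omega)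
  · exact le_trans (Polynomial.natDegree_C_mul_le _ _) (by rw [(hM (n-1)).2]; omega)
  · refine le_trans (Polynomial.natDegree_sub_le _ _) (max_le ?_ ?_)
    · exact le_trans (Polynomial.natDegree_C_mul_le _ _) (le_of_eq (hM n).2)
    · rcases n with _ | k
      · simp
      · rw [mul_assoc]
        refine le_trans (Polynomial.natDegree_C_mul_le _ _) ?_
        rw [Polynomial.natDegree_mul Polynomial.X_ne_zero (H_ne_zero hM _),
          Polynomial.natDegree_X, (hM (k+1-1)).2]
        omega

lemma Qcoeff (hM : HM H) (a : ℝ) (n : ℕ) :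
    (Matrix.of fun i j : Fin 2 => (Qmat H a n i j).coeff n)
      = !![-(2/a), 0; 0, -(2/a) - a * (n : ℝ)] := by
  refine Matrix.ext fun i j => ?_
  have hc1 : (C (-(2/a)) * H n).coeff n = -(2/a) := by
    rw [Polynomial.coeff_C_mul, H_coeff_self hM n, mul_one]
  have hc2 : (C ((n:ℕ) : ℝ) * H (n-1)).coeff n = 0 := by
    rcases n with _ | k
    · simp
    · rw [Polynomial.coeff_C_mul,
        Polynomial.coeff_eq_zero_of_natDegree_lt (by rw [(hM (k+1-1)).2]; omega), mul_zero]
  have hc3 : (C (a * ((n:ℕ) : ℝ)) * X * H (n-1)).coeff n = a * (n : ℝ) := by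
    rcases n with _ | k
    · simp
    · rw [mul_assoc, Polynomial.coeff_C_mul, Nat.add_sub_cancel, Polynomial.coeff_X_mul,
        H_coeff_self hM k, mul_one]
  fin_cases i <;> fin_cases j <;>
    simp only [Qmat, Fin.isValue, Matrix.cons_val', Matrix.cons_val_zero, Matrix.cons_val_one,
      Matrix.head_cons, Matrix.head_fin_const, Matrix.empty_val', Matrix.cons_val_fin_one,
      Matrix.of_apply, Fin.mk_zero, Fin.mk_one, Polynomial.coeff_sub, hc1, hc2, hc3]

lemma Qunit (a : ℝ) (ha : a ≠ 0) (n : ℕ) :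
    IsUnit (!![-(2/a), 0; 0, -(2/a) - a * (n : ℝ)] : Matrix (Fin 2) (Fin 2) ℝ) := by
  rw [Matrix.isUnit_iff_isUnit_det, Matrix.det_fin_two_of]
  have h1 : -(2/a) ≠ 0 := neg_ne_zero.mpr (div_ne_zero two_ne_zero ha)
  have h2 : -(2/a) - a * (n : ℝ) ≠ 0 := by
    intro h
    have key : a * (-(2/a) - a * (n : ℝ)) = -2 - a^2 * (n : ℝ) := by
      field_simp
    rw [h, mul_zero] at key
    have hn0 : (0:ℝ) ≤ (n:ℝ) := Nat.cast_nonneg n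
    nlinarith [mul_nonneg (sq_nonneg a) hn0]
  rw [isUnit_iff_ne_zero]
  simpa using mul_ne_zero h1 h2

lemma point_eq (hM : HM H) (hO : HO H) (a : ℝ) (ha : a ≠ 0) (n m : ℕ) (x : ℝ) :
    (Qmat H a n).map (Polynomial.eval x) *
        ((Real.exp (-x^2)) • !![1 + a^2 * x^2, a * x; a * x, 1]) *
        ((Qmat H a m).map (Polynomial.eval x))ᵀ
      = Real.exp (-x^2) • ((Amat H a n * (Amat H a m)ᵀ).map (Polynomial.eval x)) := by
  have hmap : ∀ (M N : Matrix (Fin 2) (Fin 2) (Polynomial ℝ)),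
      (M * N).map (Polynomial.eval x)
        = M.map (Polynomial.eval x) * N.map (Polynomial.eval x) := fun M N => by
    have := Matrix.map_mul (L := M) (M := N) (f := Polynomial.evalRingHom x)
    simpa [Polynomial.coe_evalRingHom] using this
  have hW : (!![1 + a^2 * x^2, a * x; a * x, 1] : Matrix (Fin 2) (Fin 2) ℝ)
      = (Tmat a).map (Polynomial.eval x) * ((Tmat a).map (Polynomial.eval x))ᵀ := by
    refine Matrix.ext fun i j => ?_
    fin_cases i <;> fin_cases j <;>
      simp [Tmat, Matrix.mul_apply, Matrix.transpose_apply, Fin.sum_univ_two] <;> ring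
  rw [hW, Matrix.mul_smul, Matrix.smul_mul]
  congr 1
  rw [← QT_eq hM hO a ha n, ← QT_eq hM hO a ha m, hmap, Matrix.transpose_map, hmap,
    hmap (Qmat H a m) (Tmat a), Matrix.transpose_mul]
  simp only [Matrix.mul_assoc]

end Herm

/-- The matrix polynomials
`Q_n = [[-(2/a)H_n, n H_{n-1}],[n H_{n-1}, -(2/a)H_n - a n x H_{n-1}]]`
have nonsingular leading coefficient `diag(-2/a, -2/a - an)` and are orthogonal with
respect to `W(x) = e^{-x²}[[1+a²x², ax],[ax,1]]`. -/
theorem stmt14 (a : ℝ) (ha : a ≠ 0)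
    (H : ℕ → Polynomial ℝ)
    (hMonic : ∀ n, (H n).Monic ∧ (H n).natDegree = n)
    (hOrth : ∀ n m, n ≠ m →
      ∫ x : ℝ, (H n).eval x * (H m).eval x * Real.exp (-x ^ 2) = 0) :
    (∀ n : ℕ, (∀ i j : Fin 2,
        ((!![C (-(2/a)) * H n, C (n : ℝ) * H (n - 1);
             C (n : ℝ) * H (n - 1), C (-(2/a)) * H n - C (a * (n : ℝ)) * X * H (n - 1)] :
          Matrix (Fin 2) (Fin 2) (Polynomial ℝ)) i j).natDegree ≤ n) ∧
      (Matrix.of fun i j : Fin 2 =>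
          ((!![C (-(2/a)) * H n, C (n : ℝ) * H (n - 1);
               C (n : ℝ) * H (n - 1), C (-(2/a)) * H n - C (a * (n : ℝ)) * X * H (n - 1)] :
            Matrix (Fin 2) (Fin 2) (Polynomial ℝ)) i j).coeff n) =
        !![-(2/a), 0; 0, -(2/a) - a * (n : ℝ)] ∧
      IsUnit (!![-(2/a), 0; 0, -(2/a) - a * (n : ℝ)] : Matrix (Fin 2) (Fin 2) ℝ)) ∧
    ∀ n m, n ≠ m → ∀ i j : Fin 2,
      (∫ x : ℝ,
        (((!![C (-(2/a)) * H n, C (n : ℝ) * H (n - 1);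
              C (n : ℝ) * H (n - 1), C (-(2/a)) * H n - C (a * (n : ℝ)) * X * H (n - 1)] :
            Matrix (Fin 2) (Fin 2) (Polynomial ℝ)).map (Polynomial.eval x)) *
          ((Real.exp (-x ^ 2)) • !![1 + a^2 * x^2, a * x; a * x, 1]) *
          ((!![C (-(2/a)) * H m, C (m : ℝ) * H (m - 1);
              C (m : ℝ) * H (m - 1), C (-(2/a)) * H m - C (a * (m : ℝ)) * X * H (m - 1)] :
            Matrix (Fin 2) (Fin 2) (Polynomial ℝ)).map (Polynomial.eval x))ᵀ) i j) = 0 := by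
  have hM : HM H := hMonic
  have hO : HO H := fun n m h => by
    have := hOrth n m h
    simpa [Kint, Polynomial.eval_mul, mul_assoc] using this
  refine ⟨fun n => ⟨fun i j => Qdeg hM a n i j, Qcoeff hM a n, Qunit a ha n⟩, ?_⟩
  intro n m hnm i j
  have hpt : ∀ x : ℝ,
      ((Qmat H a n).map (Polynomial.eval x) *
        ((Real.exp (-x ^ 2)) • !![1 + a^2 * x^2, a * x; a * x, 1]) *
        ((Qmat H a m).map (Polynomial.eval x))ᵀ) i j
      = ((Amat H a n * (Amat H a m)ᵀ) i j).eval x * Real.exp (-x ^ 2) := by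
    intro x
    rw [point_eq hM hO a ha n m x]
    simp [Matrix.smul_apply, Matrix.map_apply, smul_eq_mul]
    ring
  have hInt : (∫ x : ℝ,
      ((Qmat H a n).map (Polynomial.eval x) *
        ((Real.exp (-x ^ 2)) • !![1 + a^2 * x^2, a * x; a * x, 1]) *
        ((Qmat H a m).map (Polynomial.eval x))ᵀ) i j)
      = Kint ((Amat H a n * (Amat H a m)ᵀ) i j) :=
    integral_congr_ae (Filter.Eventually.of_forall hpt)
  exact hInt.trans (entryK hM hO a ha n m hnm i j)
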